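/- Let q ∈ ℂ with q ≠ 0 and q² ≠ 1, set ω = q − q⁻¹, let m ≥ 1, let μ₁, …, μ_m ∈ ℂ, and fix 1 ≤ k ≤ m. For any tuple ν = (ν₁, …, ν_m) define P(X; ν) := ω⁻¹ · (∏_{i=1}^{m} (1 − q⁻² ν_i X) · (∏_{i=1}^{m} (1 − ν_i X))⁻¹ − 1) ∈ ℂ[[X]], and let S_k(X) := q⁻² μ_k X · ((1 − q⁻² μ_k X)⁻¹)² ∈ ℂ[[X]]. Let μ′ be the tuple obtained from μ by replacing μ_k with q⁻² μ_k. Then in ℂ[[X]]: P(X; μ′) + ω S_k(X) = P(X; μ) · (1 − ω² S_k(X)). -/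

import Mathlib

open Finset PowerSeries

lemma key_quad (q t : ℂ) (hq : q ≠ 0) :
    (1 - C (q ^ 2 * t) * X) * (1 - C (q⁻¹ ^ 2 * t) * X)
      = (1 - C t * X) ^ 2 - C ((q - q⁻¹) ^ 2) * (C t * X) := by
  have hc : C q * C q⁻¹ = 1 := by
    rw [← map_mul, mul_inv_cancel₀ hq, map_one]
  simp only [map_mul, map_pow, map_sub]
  linear_combination (-2 * C t * X + (C q * C q⁻¹ + 1) * (C t) ^ 2 * X ^ 2) * hc

/-- the shift identity `P(X; μ') + ωS_k(X) = P(X; μ)·(1 − ω²S_k(X))`, where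
`μ'` replaces `μ_k` by `q⁻²μ_k` and `S_k(X) = z/(1−z)²` at `z = q⁻²μ_k X`. -/
theorem stmt_9 (q : ℂ) (hq : q ≠ 0) (hq2 : q ^ 2 ≠ 1) (ω : ℂ) (hω : ω = q - q⁻¹)
    (m : ℕ) (hm : 1 ≤ m) (μ : Fin m → ℂ) (k : Fin m)
    (P : (Fin m → ℂ) → PowerSeries ℂ)
    (hP : ∀ ν : Fin m → ℂ, P ν = C ω⁻¹ *
      ((∏ i, (1 - C (q⁻¹ ^ 2 * ν i) * X)) * (∏ i, (1 - C (ν i) * X))⁻¹ - 1))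
    (S : PowerSeries ℂ)
    (hS : S = C (q⁻¹ ^ 2 * μ k) * X * ((1 - C (q⁻¹ ^ 2 * μ k) * X)⁻¹) ^ 2) :
    P (Function.update μ k (q⁻¹ ^ 2 * μ k)) + C ω * S
      = P μ * (1 - C (ω ^ 2) * S) := by
  have hωne : ω ≠ 0 := by
    rw [hω]
    have : q - q⁻¹ = (q ^ 2 - 1) / q := by field_simp
    rw [this]
    exact div_ne_zero (sub_ne_zero.2 hq2) hq
  set a : ℂ := q⁻¹ ^ 2 * μ k with ha
  set u : PowerSeries ℂ := C a * X with hu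
  have hcc : ∀ b : ℂ, constantCoeff (1 - C b * X) = 1 := by
    intro b; simp
  have hccne : ∀ b : ℂ, constantCoeff (1 - C b * X) ≠ 0 := by
    intro b; rw [hcc]; exact one_ne_zero
  have hprodcc : ∀ ν : Fin m → ℂ, constantCoeff (∏ i, (1 - C (ν i) * X)) ≠ 0 := by
    intro ν
    rw [map_prod]
    simp [hcc]
  set A' : PowerSeries ℂ := ∏ i, (1 - C (q⁻¹ ^ 2 * Function.update μ k a i) * X) with hA'def
  set A : PowerSeries ℂ := ∏ i, (1 - C (q⁻¹ ^ 2 * μ i) * X) with hAdef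
  set B' : PowerSeries ℂ := ∏ i, (1 - C (Function.update μ k a i) * X) with hB'def
  set B : PowerSeries ℂ := ∏ i, (1 - C (μ i) * X) with hBdef
  set A₀ : PowerSeries ℂ := ∏ i ∈ univ.erase k, (1 - C (q⁻¹ ^ 2 * μ i) * X) with hA0
  set B₀ : PowerSeries ℂ := ∏ i ∈ univ.erase k, (1 - C (μ i) * X) with hB0
  have hA : A = (1 - u) * A₀ := by
    rw [hAdef, ← Finset.mul_prod_erase univ _ (mem_univ k)]
  have hB : B = (1 - C (μ k) * X) * B₀ := by
    rw [hBdef, ← Finset.mul_prod_erase univ _ (mem_univ k)]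
  have hA' : A' = (1 - C (q⁻¹ ^ 2 * a) * X) * A₀ := by
    rw [hA'def, ← Finset.mul_prod_erase univ _ (mem_univ k)]
    congr 1
    · rw [Function.update_self]
    · exact Finset.prod_congr rfl fun i hi => by
        rw [Function.update_of_ne (Finset.mem_erase.1 hi).1]
  have hB' : B' = (1 - u) * B₀ := by
    rw [hB'def, ← Finset.mul_prod_erase univ _ (mem_univ k)]
    congr 1
    · rw [Function.update_self]
    · exact Finset.prod_congr rfl fun i hi => by
        rw [Function.update_of_ne (Finset.mem_erase.1 hi).1]
  have hωc : C ω⁻¹ * C ω = 1 := by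
    rw [← map_mul, inv_mul_cancel₀ hωne, map_one]
  have hB'c : B'⁻¹ * B' = 1 := PowerSeries.inv_mul_cancel _ (hprodcc _)
  have hBc : B⁻¹ * B = 1 := PowerSeries.inv_mul_cancel _ (hprodcc _)
  have huc : (1 - u)⁻¹ * (1 - u) = 1 := PowerSeries.inv_mul_cancel _ (hccne a)
  have c1 : ((1 - u)⁻¹) ^ 2 * (1 - u) ^ 2 = 1 := by
    rw [← mul_pow, huc, one_pow]
  have hne : ∀ φ : PowerSeries ℂ, constantCoeff φ ≠ 0 → φ ≠ 0 := by
    intro φ h h0; exact h (by rw [h0]; simp)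
  have hD : C ω * (1 - u) ^ 2 * B' * B ≠ 0 := by
    refine mul_ne_zero (mul_ne_zero (mul_ne_zero ?_ ?_) ?_) ?_
    · simpa using hωne
    · exact pow_ne_zero _ (hne _ (hccne a))
    · exact hne _ (hprodcc _)
    · exact hne _ (hprodcc _)
  apply mul_right_cancel₀ hD
  have hsq : C (ω ^ 2) = C ω * C ω := by rw [sq, map_mul]
  have K : (1 - C (μ k) * X) * (1 - C (q⁻¹ ^ 2 * a) * X)
      = (1 - u) ^ 2 - C (ω ^ 2) * u := by
    have hμk : μ k = q ^ 2 * a := by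
      rw [ha]; field_simp
    rw [hu, hω]
    nth_rewrite 1 [hμk]
    exact key_quad q a hq
  have e1 : (C ω⁻¹ * (A' * B'⁻¹ - 1) + C ω * (u * ((1 - u)⁻¹) ^ 2)) *
      (C ω * (1 - u) ^ 2 * B' * B)
      = (A' * B - B' * B) * (1 - u) ^ 2 + C (ω ^ 2) * u * (B' * B) := by
    rw [hsq]
    calc (C ω⁻¹ * (A' * B'⁻¹ - 1) + C ω * (u * ((1 - u)⁻¹) ^ 2)) *
          (C ω * (1 - u) ^ 2 * B' * B)
        = (C ω⁻¹ * C ω) * ((A' * (B'⁻¹ * B') - B') * B * (1 - u) ^ 2)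
            + (C ω * C ω) * (u * (((1 - u)⁻¹) ^ 2 * (1 - u) ^ 2) * (B' * B)) := by ring
      _ = (A' * B - B' * B) * (1 - u) ^ 2 + C ω * C ω * u * (B' * B) := by
          rw [hωc, hB'c, c1]; ring
  have e2 : (C ω⁻¹ * (A * B⁻¹ - 1) * (1 - C (ω ^ 2) * (u * ((1 - u)⁻¹) ^ 2))) *
      (C ω * (1 - u) ^ 2 * B' * B)
      = (A * B' - B * B') * ((1 - u) ^ 2 - C (ω ^ 2) * u) := by
    rw [hsq]
    calc (C ω⁻¹ * (A * B⁻¹ - 1) * (1 - C ω * C ω * (u * ((1 - u)⁻¹) ^ 2))) *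
          (C ω * (1 - u) ^ 2 * B' * B)
        = (C ω⁻¹ * C ω) * ((A * (B⁻¹ * B) - B) * B' *
            ((1 - u) ^ 2 - C ω * C ω * (u * (((1 - u)⁻¹) ^ 2 * (1 - u) ^ 2)))) := by ring
      _ = (A * B' - B * B') * ((1 - u) ^ 2 - C ω * C ω * u) := by
          rw [hωc, hBc, c1]; ring
  rw [hP, hP, hS, ← hA'def, ← hB'def, ← hAdef, ← hBdef]
  rw [e1, e2]
  rw [hA, hA', hB, hB']
  linear_combination ((1 - u) ^ 2 * A₀ * B₀) * K
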